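/- arXiv:1208.4407 — 4 statements merged into one kernel-verified Lean document; each statement's English description precedes it below -/
import Mathlib

section
/- Fix H ∈ (0,1), C > 0, and t > 0. There exists a constant C' > 0 (depending on H, C, t) such that for all real u, ∫₀ᵗ e^{-C u² a^{2H}} da ≤ C' / (1 + |u|^{1/H}). -/
open Real MeasureTheory

private lemma exp_neg_le_factorial_div {x : ℝ} (hx : 0 < x) (k : ℕ) :
    Real.exp (-x) ≤ (Nat.factorial k : ℝ) / x ^ k := by
  rw [Real.exp_neg, ← inv_div]
  exact inv_anti₀ (by positivity) (Real.pow_div_factorial_le_exp x hx.le k)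

theorem stmt_2 (H C t : ℝ) (hH0 : 0 < H) (hH1 : H < 1) (hC : 0 < C) (ht : 0 < t) :
    ∃ C' > (0:ℝ), ∀ u : ℝ,
      (∫ a in Set.Ioc (0:ℝ) t, Real.exp (-C * u ^ 2 * a ^ (2 * H))) ≤
        C' / (1 + |u| ^ (1 / H)) := by
  have h2H : (0:ℝ) < 2 * H := by linarith
  set k : ℕ := ⌈1 / (2 * H)⌉₊ + 1 with hk_def
  have hkc : (1:ℝ) / (2 * H) ≤ (⌈1 / (2 * H)⌉₊ : ℝ) := Nat.le_ceil _
  have hkR : (k : ℝ) = (⌈1 / (2 * H)⌉₊ : ℝ) + 1 := by rw [hk_def]; push_cast; ring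
  have hk1 : 1 + 2 * H ≤ 2 * H * k := by
    have h1 : 1 ≤ 2 * H * (⌈1 / (2 * H)⌉₊ : ℝ) := by
      rw [mul_comm]
      exact (div_le_iff₀ h2H).mp hkc
    rw [hkR]; nlinarith
  have hsgt : (0:ℝ) < 2 * H * k - 1 := by linarith
  set B : ℝ := (Nat.factorial k : ℝ) / (C ^ k * (2 * H * k - 1)) with hB
  have hB0 : 0 ≤ B := by positivity
  refine ⟨2 * (t + 1 + B), by positivity, fun u => ?_⟩
  have triv : ∀ s : ℝ, 0 ≤ s →
      (∫ a in Set.Ioc (0:ℝ) s, Real.exp (-C * u ^ 2 * a ^ (2 * H))) ≤ s := by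
    intro s hs0
    have hb : ∀ a ∈ Set.Ioc (0:ℝ) s, ‖Real.exp (-C * u ^ 2 * a ^ (2 * H))‖ ≤ 1 := by
      intro a ha
      rw [Real.norm_eq_abs, abs_of_pos (Real.exp_pos _), Real.exp_le_one_iff]
      have h1 : 0 ≤ a ^ (2 * H) := Real.rpow_nonneg ha.1.le _
      have := mul_nonneg (mul_nonneg hC.le (sq_nonneg u)) h1
      nlinarith
    have hnorm := norm_setIntegral_le_of_norm_le_const (μ := volume) (s := Set.Ioc 0 s)
      (by rw [Real.volume_Ioc]; exact ENNReal.ofReal_lt_top) hb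
    rw [Measure.real, Real.volume_Ioc, one_mul, ENNReal.toReal_ofReal (by linarith)] at hnorm
    calc (∫ a in Set.Ioc (0:ℝ) s, Real.exp (-C * u ^ 2 * a ^ (2 * H)))
        ≤ ‖∫ a in Set.Ioc (0:ℝ) s, Real.exp (-C * u ^ 2 * a ^ (2 * H))‖ := le_abs_self _
      _ ≤ s - 0 := hnorm
      _ = s := by ring
  have hIle : (∫ a in Set.Ioc (0:ℝ) t, Real.exp (-C * u ^ 2 * a ^ (2 * H))) ≤ t := triv t ht.le
  rcases le_or_gt (|u|) 1 with hu | hu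
  · have hx1 : |u| ^ (1 / H) ≤ 1 := Real.rpow_le_one (abs_nonneg u) hu (by positivity)
    have hx0 : 0 ≤ |u| ^ (1 / H) := Real.rpow_nonneg (abs_nonneg u) _
    refine hIle.trans ?_
    rw [le_div_iff₀ (by linarith)]
    nlinarith
  · have hu0 : (0:ℝ) < |u| := by linarith
    have hune : u ≠ 0 := by
      intro h; rw [h, abs_zero] at hu; linarith
    have hu2 : (0:ℝ) < u ^ 2 := by nlinarith [sq_abs u]
    have hu2k : (0:ℝ) < u ^ (2 * k) := by rw [pow_mul]; exact pow_pos hu2 k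
    set a₀ : ℝ := |u| ^ (-(1 / H)) with ha₀def
    have ha₀ : 0 < a₀ := Real.rpow_pos_of_pos hu0 _
    have key : (∫ a in Set.Ioc (0:ℝ) t, Real.exp (-C * u ^ 2 * a ^ (2 * H))) ≤ (1 + B) * a₀ := by
      rcases le_or_gt t a₀ with hta | hta
      · refine hIle.trans (hta.trans ?_)
        nlinarith
      · have hfc : Continuous (fun a : ℝ => Real.exp (-C * u ^ 2 * a ^ (2 * H))) :=
          Real.continuous_exp.comp (continuous_const.mul (Real.continuous_rpow_const h2H.le))
        have hint : ∀ p q : ℝ,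
            IntervalIntegrable (fun a : ℝ => Real.exp (-C * u ^ 2 * a ^ (2 * H))) volume p q :=
          fun p q => hfc.intervalIntegrable p q
        have hsplit : (∫ a in Set.Ioc (0:ℝ) t, Real.exp (-C * u ^ 2 * a ^ (2 * H)))
            = (∫ a in (0:ℝ)..a₀, Real.exp (-C * u ^ 2 * a ^ (2 * H)))
              + ∫ a in a₀..t, Real.exp (-C * u ^ 2 * a ^ (2 * H)) := by
          rw [← intervalIntegral.integral_of_le ht.le,
            ← intervalIntegral.integral_add_adjacent_intervals (hint 0 a₀) (hint a₀ t)]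
        have h1 : (∫ a in (0:ℝ)..a₀, Real.exp (-C * u ^ 2 * a ^ (2 * H))) ≤ a₀ := by
          rw [intervalIntegral.integral_of_le ha₀.le]; exact triv a₀ ha₀.le
        set D : ℝ := (Nat.factorial k : ℝ) / (C ^ k * u ^ (2 * k)) with hD
        have hD0 : 0 < D := div_pos (by positivity) (by positivity)
        have hpt : ∀ a ∈ Set.Icc a₀ t,
            Real.exp (-C * u ^ 2 * a ^ (2 * H)) ≤ D * a ^ (-(2 * H * (k:ℝ))) := by
          intro a ha
          have ha0 : 0 < a := lt_of_lt_of_le ha₀ ha.1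
          have harp : 0 < a ^ (2 * H) := Real.rpow_pos_of_pos ha0 _
          have hx : 0 < C * u ^ 2 * a ^ (2 * H) := by positivity
          have h1 : Real.exp (-C * u ^ 2 * a ^ (2 * H))
              ≤ (Nat.factorial k : ℝ) / (C * u ^ 2 * a ^ (2 * H)) ^ k := by
            have := exp_neg_le_factorial_div hx k
            convert this using 2
            ring
          refine h1.trans (le_of_eq ?_)
          rw [mul_pow, mul_pow, ← Real.rpow_natCast (a ^ (2 * H)) k,
            ← Real.rpow_mul ha0.le, Real.rpow_neg ha0.le, hD, pow_mul]
          have hXpos : (0:ℝ) < a ^ (2 * H * (k:ℝ)) := Real.rpow_pos_of_pos ha0 _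
          field_simp
        have hg_cont : ContinuousOn (fun a : ℝ => D * a ^ (-(2 * H * (k:ℝ))))
            (Set.uIcc a₀ t) := by
          apply continuousOn_const.mul
          intro x hx
          rw [Set.uIcc_of_le hta.le] at hx
          have hx0 : x ≠ 0 := ne_of_gt (lt_of_lt_of_le ha₀ hx.1)
          exact (Real.continuousAt_rpow_const x _ (Or.inl hx0)).continuousWithinAt
        have h2 : (∫ a in a₀..t, Real.exp (-C * u ^ 2 * a ^ (2 * H)))
            ≤ ∫ a in a₀..t, D * a ^ (-(2 * H * (k:ℝ))) :=
          intervalIntegral.integral_mono_on hta.le (hint a₀ t) hg_cont.intervalIntegrable hpt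
        have h3 : (∫ a in a₀..t, D * a ^ (-(2 * H * (k:ℝ))))
            = D * ((t ^ (-(2 * H * (k:ℝ)) + 1) - a₀ ^ (-(2 * H * (k:ℝ)) + 1))
                / (-(2 * H * (k:ℝ)) + 1)) := by
          rw [intervalIntegral.integral_const_mul, integral_rpow
            (Or.inr ⟨by intro h; linarith, Set.notMem_uIcc_of_lt ha₀ ht⟩)]
        have hY : a₀ ^ (-(2 * H * (k:ℝ)) + 1) = u ^ (2 * k) * a₀ := by
          rw [ha₀def, ← Real.rpow_mul (abs_nonneg u)]
          have hexp : -(1 / H) * (-(2 * H * (k:ℝ)) + 1) = 2 * (k:ℝ) + (-(1 / H)) := by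
            field_simp
            ring
          rw [hexp, Real.rpow_add hu0]
          congr 1
          rw [show (2 * (k:ℝ)) = ((2 * k : ℕ) : ℝ) by push_cast; ring,
            Real.rpow_natCast, pow_abs, abs_of_pos hu2k]
        have hCkne : C ^ k ≠ 0 := by positivity
        have hu2kne : u ^ (2 * k) ≠ 0 := hu2k.ne'
        have hs_ne : 2 * H * (k:ℝ) - 1 ≠ 0 := hsgt.ne'
        have hs_ne' : -(2 * H * (k:ℝ)) + 1 ≠ 0 := by intro h; linarith
        have h4 : D * ((t ^ (-(2 * H * (k:ℝ)) + 1) - a₀ ^ (-(2 * H * (k:ℝ)) + 1))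
            / (-(2 * H * (k:ℝ)) + 1)) ≤ B * a₀ := by
          have hT0 : 0 ≤ t ^ (-(2 * H * (k:ℝ)) + 1) := Real.rpow_nonneg ht.le _
          set T := t ^ (-(2 * H * (k:ℝ)) + 1) with hT
          have hid : D * ((T - u ^ (2 * k) * a₀) / (-(2 * H * (k:ℝ)) + 1))
              = B * a₀ - D * T / (2 * H * (k:ℝ) - 1) := by
            rw [hD, hB]
            field_simp
            ring
          rw [hY, hid]
          have hpos : 0 ≤ D * T / (2 * H * (k:ℝ) - 1) := by positivity
          linarith
        calc (∫ a in Set.Ioc (0:ℝ) t, Real.exp (-C * u ^ 2 * a ^ (2 * H)))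
            = (∫ a in (0:ℝ)..a₀, Real.exp (-C * u ^ 2 * a ^ (2 * H)))
              + ∫ a in a₀..t, Real.exp (-C * u ^ 2 * a ^ (2 * H)) := hsplit
          _ ≤ a₀ + B * a₀ := add_le_add h1 ((h2.trans_eq h3).trans h4)
          _ = (1 + B) * a₀ := by ring
    have hxge : (1:ℝ) ≤ |u| ^ (1 / H) := Real.one_le_rpow hu.le (by positivity)
    refine key.trans ?_
    rw [ha₀def, Real.rpow_neg (abs_nonneg u)]
    have hx0 : (0:ℝ) < |u| ^ (1 / H) := lt_of_lt_of_le one_pos hxge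
    rw [show (1 + B) * (|u| ^ (1 / H))⁻¹ = (1 + B) / (|u| ^ (1 / H)) from
        (div_eq_mul_inv (1 + B) (|u| ^ (1 / H))).symm,
      div_le_div_iff₀ hx0 (by linarith)]
    nlinarith [mul_nonneg hB0 (by linarith : (0:ℝ) ≤ |u| ^ (1 / H) - 1)]
end

section
/- Let H ∈ (1/3, 2/3) and t > 0, and define F(y) := -(y/√(2π)) ∫₀ᵗ ∫₀ˢ (s-r)^{-3H} exp(-y²/(2(s-r)^{2H})) dr ds for y > 0. Then lim_{y → 0⁺} F(y)/y^{1/H - 2} = -(t/√(2π)) ∫₀^∞ v^{-3H} exp(-v^{-2H}/2) dv, and the limit integral is finite. -/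
open Real MeasureTheory Filter Set

namespace Stmt9Aux

/-- The limiting integrand. -/
noncomputable def g (H v : ℝ) : ℝ := v ^ (-(3 * H)) * Real.exp (-(v ^ (-(2 * H))) / 2)

lemma g_nonneg (H : ℝ) {v : ℝ} (hv : 0 ≤ v) : 0 ≤ g H v :=
  mul_nonneg (Real.rpow_nonneg hv _) (Real.exp_nonneg _)

lemma g_contOn (H : ℝ) : ContinuousOn (g H) (Set.Ioi 0) := by
  have h1 : ContinuousOn (fun v : ℝ => v ^ (-(3 * H))) (Set.Ioi 0) :=
    continuousOn_id.rpow_const fun x hx => Or.inl (ne_of_gt hx)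
  have h2 : ContinuousOn (fun v : ℝ => v ^ (-(2 * H))) (Set.Ioi 0) :=
    continuousOn_id.rpow_const fun x hx => Or.inl (ne_of_gt hx)
  exact h1.mul ((h2.neg.div_const 2).rexp)

lemma integrable_g (H : ℝ) (hH1 : 1 / 3 < H) : IntegrableOn (g H) (Set.Ioi 0) := by
  have hH0 : 0 < H := lt_trans (by norm_num) hH1
  rw [show Set.Ioi (0:ℝ) = Set.Ioc 0 1 ∪ Set.Ioi 1 from
    (Set.Ioc_union_Ioi_eq_Ioi zero_le_one).symm]
  refine MeasureTheory.IntegrableOn.union ?_ ?_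
  · -- bounded by 16 on (0,1]
    refine Integrable.mono' (g := fun _ => (16:ℝ))
      (integrableOn_const measure_Ioc_lt_top.ne)
      (((g_contOn H).mono Set.Ioc_subset_Ioi_self).aestronglyMeasurable measurableSet_Ioc) ?_
    rw [ae_restrict_iff' measurableSet_Ioc]
    refine Filter.Eventually.of_forall fun v hv => ?_
    rcases hv with ⟨hv0, hv1⟩
    set x : ℝ := v ^ (-(2 * H)) with hx
    have hx1 : 1 ≤ x := Real.one_le_rpow_of_pos_of_le_one_of_nonpos hv0 hv1 (by nlinarith)
    have hx0 : 0 ≤ x := le_trans zero_le_one hx1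
    have hv3 : v ^ (-(3 * H)) = x ^ ((3:ℝ)/2) := by
      rw [hx, ← Real.rpow_mul hv0.le]
      congr 1
      ring
    have hA : x ^ ((3:ℝ)/2) ≤ x ^ (2:ℝ) :=
      Real.rpow_le_rpow_of_exponent_le hx1 (by norm_num)
    have hE : Real.exp (x/4) * Real.exp (x/4) = Real.exp (x/2) := by
      rw [← Real.exp_add]; ring_nf
    have hE2 : x ^ (2:ℝ) ≤ 16 * Real.exp (x/2) := by
      rw [Real.rpow_two]
      nlinarith [Real.add_one_le_exp (x/4), Real.exp_pos (x/4)]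
    have hmul : Real.exp (-x/2) * Real.exp (x/2) = 1 := by
      rw [← Real.exp_add]; ring_nf; exact Real.exp_zero
    have hgle : g H v ≤ 16 := by
      unfold g
      rw [hv3, show -x/2 = -x/2 from rfl]
      have h1 : x ^ ((3:ℝ)/2) * Real.exp (-x/2) ≤ x ^ (2:ℝ) * Real.exp (-x/2) :=
        mul_le_mul_of_nonneg_right hA (Real.exp_nonneg _)
      have h2 : x ^ (2:ℝ) * Real.exp (-x/2) ≤ 16 := by
        nlinarith [Real.exp_pos (-x/2), Real.exp_pos (x/2),
          mul_le_mul_of_nonneg_right hE2 (Real.exp_nonneg (-x/2))]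
      calc x ^ ((3:ℝ)/2) * Real.exp (-x/2) ≤ x ^ (2:ℝ) * Real.exp (-x/2) := h1
        _ ≤ 16 := h2
    rw [Real.norm_eq_abs, abs_of_nonneg (g_nonneg H hv0.le)]
    exact hgle
  · -- dominated by v ^ (-(3H)) on (1,∞)
    refine Integrable.mono' (g := fun v : ℝ => v ^ (-(3 * H)))
      (integrableOn_Ioi_rpow_of_lt (by linarith) one_pos)
      (((g_contOn H).mono (Set.Ioi_subset_Ioi zero_le_one)).aestronglyMeasurable
        measurableSet_Ioi) ?_
    rw [ae_restrict_iff' measurableSet_Ioi]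
    refine Filter.Eventually.of_forall fun v hv => ?_
    have hv0 : (0:ℝ) < v := lt_trans one_pos hv
    rw [Real.norm_eq_abs, abs_of_nonneg (g_nonneg H hv0.le)]
    unfold g
    have : Real.exp (-(v ^ (-(2 * H))) / 2) ≤ 1 := by
      rw [Real.exp_le_one_iff]
      have := Real.rpow_nonneg hv0.le (-(2 * H)) (x := v)
      linarith
    calc v ^ (-(3 * H)) * Real.exp (-(v ^ (-(2 * H))) / 2)
        ≤ v ^ (-(3 * H)) * 1 :=
          mul_le_mul_of_nonneg_left this (Real.rpow_nonneg hv0.le _)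
      _ = v ^ (-(3 * H)) := mul_one _

/-- Truncated integral of `g`. -/
noncomputable def Gh (H x : ℝ) : ℝ := ∫ v in Set.Ioc (0:ℝ) x, g H v

lemma Gh_nonneg (H x : ℝ) : 0 ≤ Gh H x :=
  setIntegral_nonneg measurableSet_Ioc fun v hv => g_nonneg H hv.1.le

lemma Gh_le (H : ℝ) (hg : IntegrableOn (g H) (Set.Ioi 0)) (x : ℝ) :
    Gh H x ≤ ∫ v in Set.Ioi (0:ℝ), g H v := by
  refine setIntegral_mono_set hg ?_ (HasSubset.Subset.eventuallyLE Set.Ioc_subset_Ioi_self)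
  rw [Filter.EventuallyLE, ae_restrict_iff' measurableSet_Ioi]
  exact Filter.Eventually.of_forall fun v hv => g_nonneg H hv.le

lemma Gh_mono (H : ℝ) (hg : IntegrableOn (g H) (Set.Ioi 0)) : Monotone (Gh H) := by
  intro x₁ x₂ h
  refine setIntegral_mono_set (hg.mono_set Set.Ioc_subset_Ioi_self) ?_
    (HasSubset.Subset.eventuallyLE (Set.Ioc_subset_Ioc_right h))
  rw [Filter.EventuallyLE, ae_restrict_iff' measurableSet_Ioc]
  exact Filter.Eventually.of_forall fun v hv => g_nonneg H hv.1.le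

lemma Gh_eq_interval (H : ℝ) {x : ℝ} (hx : 0 ≤ x) :
    Gh H x = ∫ v in (0:ℝ)..x, g H v := (intervalIntegral.integral_of_le hx).symm

lemma tendsto_Gh (H : ℝ) (hH0 : 0 < H) (hg : IntegrableOn (g H) (Set.Ioi 0))
    {s : ℝ} (hs : 0 < s) :
    Tendsto (fun y : ℝ => Gh H (s * y ^ (-(1/H)))) (nhdsWithin 0 (Set.Ioi 0))
      (nhds (∫ v in Set.Ioi (0:ℝ), g H v)) := by
  have hb : Tendsto (fun y : ℝ => s * y ^ (-(1/H))) (nhdsWithin 0 (Set.Ioi 0)) atTop := by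
    have h1 : Tendsto (fun y : ℝ => (y⁻¹) ^ (1/H)) (nhdsWithin 0 (Set.Ioi 0)) atTop :=
      (tendsto_rpow_atTop (by positivity)).comp tendsto_inv_nhdsGT_zero
    have h2 : Tendsto (fun y : ℝ => y ^ (-(1/H))) (nhdsWithin 0 (Set.Ioi 0)) atTop := by
      refine h1.congr' ?_
      filter_upwards [self_mem_nhdsWithin] with y hy
      rw [← Real.rpow_neg_one y, ← Real.rpow_mul (le_of_lt hy)]
      norm_num
    exact h2.const_mul_atTop hs
  have h3 := MeasureTheory.intervalIntegral_tendsto_integral_Ioi 0 hg hb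
  refine h3.congr' ?_
  filter_upwards [self_mem_nhdsWithin] with y hy
  have hy0 : (0:ℝ) < y := hy
  have harg : 0 ≤ s * y ^ (-(1/H)) := by positivity
  exact (Gh_eq_interval H harg).symm

lemma key_identity (H t : ℝ) (hH0 : 0 < H) (ht : 0 < t) (F : ℝ → ℝ)
    (hF : ∀ y, F y = -(y / Real.sqrt (2 * Real.pi)) *
      ∫ s in Set.Ioc (0:ℝ) t, ∫ r in Set.Ioc (0:ℝ) s,
        (s - r) ^ (-(3 * H)) * Real.exp (-y ^ 2 / (2 * (s - r) ^ (2 * H))))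
    {y : ℝ} (hy : 0 < y) :
    F y / y ^ (1/H - 2) = -(1 / Real.sqrt (2 * Real.pi)) *
      ∫ s in Set.Ioc (0:ℝ) t, Gh H (s * y ^ (-(1/H))) := by
  have hHne : H ≠ 0 := ne_of_gt hH0
  set c : ℝ := y ^ (1/H) with hcdef
  have hc : 0 < c := Real.rpow_pos_of_pos hy _
  have hy2 : (0:ℝ) < y ^ 2 := by positivity
  have hcy2 : c ^ (2 * H) = y ^ 2 := by
    rw [hcdef, ← Real.rpow_natCast y 2, ← Real.rpow_mul hy.le]
    congr 1
    field_simp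
    norm_num
  have hcK : c ^ (-(3 * H)) = y ^ (-3 : ℝ) := by
    rw [hcdef, ← Real.rpow_mul hy.le]
    congr 1
    field_simp
  -- the inner integral computation
  have inner_eq : ∀ s ∈ Set.Ioc (0:ℝ) t,
      (∫ r in Set.Ioc (0:ℝ) s,
        (s - r) ^ (-(3 * H)) * Real.exp (-y ^ 2 / (2 * (s - r) ^ (2 * H))))
      = c * y ^ (-3:ℝ) * Gh H (s * y ^ (-(1/H))) := by
    intro s hsmem
    have hs : 0 < s := hsmem.1
    set φ : ℝ → ℝ := fun u => u ^ (-(3 * H)) * Real.exp (-y ^ 2 / (2 * u ^ (2 * H))) with hφ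
    have e1 : (∫ r in Set.Ioc (0:ℝ) s, φ (s - r)) = ∫ r in (0:ℝ)..s, φ (s - r) :=
      (intervalIntegral.integral_of_le hs.le).symm
    have e2 : (∫ r in (0:ℝ)..s, φ (s - r)) = ∫ u in (0:ℝ)..s, φ u := by
      rw [intervalIntegral.integral_comp_sub_left φ s, sub_self, sub_zero]
    have e3 : (∫ u in (0:ℝ)..s, φ u) = c * ∫ v in (0:ℝ)..(s/c), φ (c * v) := by
      rw [intervalIntegral.integral_comp_mul_left φ hc.ne', mul_zero,
        mul_div_cancel₀ _ hc.ne', smul_eq_mul, ← mul_assoc,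
        mul_inv_cancel₀ hc.ne', one_mul]
    have e4 : (∫ v in (0:ℝ)..(s/c), φ (c * v))
        = ∫ v in (0:ℝ)..(s/c), y ^ (-3:ℝ) * g H v := by
      refine intervalIntegral.integral_congr fun v hv => ?_
      rw [Set.uIcc_of_le (by positivity)] at hv
      rcases eq_or_lt_of_le hv.1 with h0 | h0
      · -- v = 0
        rw [← h0, mul_zero]
        have h3H : -(3 * H) ≠ 0 := by
          intro h; apply hHne; linarith [neg_eq_zero.mp h]
        simp [hφ, g, Real.zero_rpow h3H]
      · -- v > 0
        have hv2H : (0:ℝ) < v ^ (2 * H) := Real.rpow_pos_of_pos h0 _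
        rw [hφ, g]
        simp only
        rw [Real.mul_rpow hc.le h0.le, Real.mul_rpow hc.le h0.le, hcK, hcy2]
        have hexp : -y ^ 2 / (2 * (y ^ 2 * v ^ (2 * H))) = -(v ^ (-(2 * H))) / 2 := by
          rw [Real.rpow_neg h0.le]
          field_simp
        rw [hexp]
        ring
    have e5 : (∫ v in (0:ℝ)..(s/c), y ^ (-3:ℝ) * g H v)
        = y ^ (-3:ℝ) * ∫ v in (0:ℝ)..(s/c), g H v :=
      intervalIntegral.integral_const_mul _ _
    have e6 : (∫ v in (0:ℝ)..(s/c), g H v) = Gh H (s * y ^ (-(1/H))) := by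
      have hdiv : s / c = s * y ^ (-(1/H)) := by
        rw [hcdef, Real.rpow_neg hy.le, div_eq_mul_inv]
      rw [hdiv, ← Gh_eq_interval H (by positivity)]
    calc (∫ r in Set.Ioc (0:ℝ) s, φ (s - r))
        = ∫ u in (0:ℝ)..s, φ u := by rw [e1, e2]
      _ = c * ∫ v in (0:ℝ)..(s/c), φ (c * v) := e3
      _ = c * (y ^ (-3:ℝ) * ∫ v in (0:ℝ)..(s/c), g H v) := by rw [e4, e5]
      _ = c * y ^ (-3:ℝ) * Gh H (s * y ^ (-(1/H))) := by rw [e6]; ring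
  have houter : (∫ s in Set.Ioc (0:ℝ) t, ∫ r in Set.Ioc (0:ℝ) s,
      (s - r) ^ (-(3 * H)) * Real.exp (-y ^ 2 / (2 * (s - r) ^ (2 * H))))
      = c * y ^ (-3:ℝ) * ∫ s in Set.Ioc (0:ℝ) t, Gh H (s * y ^ (-(1/H))) := by
    rw [setIntegral_congr_fun measurableSet_Ioc inner_eq]
    exact MeasureTheory.integral_const_mul _ _
  have hpow : y * (c * y ^ (-3:ℝ)) = y ^ (1/H - 2) := by
    rw [hcdef, ← Real.rpow_add hy]
    nth_rewrite 1 [← Real.rpow_one y]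
    rw [← Real.rpow_add hy]
    congr 1
    ring
  have hne : y ^ (1/H - 2) ≠ 0 := (Real.rpow_pos_of_pos hy _).ne'
  rw [hF y, houter]
  set A := Real.sqrt (2 * Real.pi)
  set P := ∫ s in Set.Ioc (0:ℝ) t, Gh H (s * y ^ (-(1/H)))
  have : -(y / A) * (c * y ^ (-3:ℝ) * P) = -(1 / A) * P * (y * (c * y ^ (-3:ℝ))) := by
    ring
  rw [this, hpow, mul_div_assoc, div_self hne, mul_one]

end Stmt9Aux

open Stmt9Aux in
theorem stmt_9 (H t : ℝ) (hH1 : 1 / 3 < H) (hH2 : H < 2 / 3) (ht : 0 < t)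
    (F : ℝ → ℝ)
    (hF : ∀ y, F y = -(y / Real.sqrt (2 * Real.pi)) *
      ∫ s in Set.Ioc (0:ℝ) t, ∫ r in Set.Ioc (0:ℝ) s,
        (s - r) ^ (-(3 * H)) * Real.exp (-y ^ 2 / (2 * (s - r) ^ (2 * H)))) :
    IntegrableOn (fun v : ℝ => v ^ (-(3 * H)) * Real.exp (-(v ^ (-(2 * H))) / 2))
        (Set.Ioi 0) ∧
    Tendsto (fun y => F y / y ^ (1 / H - 2)) (nhdsWithin 0 (Set.Ioi 0))
      (nhds (-(t / Real.sqrt (2 * Real.pi)) *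
        ∫ v in Set.Ioi (0:ℝ), v ^ (-(3 * H)) * Real.exp (-(v ^ (-(2 * H))) / 2))) := by
  have hH0 : 0 < H := lt_trans (by norm_num) hH1
  have hg : IntegrableOn (g H) (Set.Ioi 0) := integrable_g H hH1
  refine ⟨hg, ?_⟩
  set I : ℝ := ∫ v in Set.Ioi (0:ℝ), g H v with hIdef
  -- dominated convergence
  have hmain : Tendsto (fun y : ℝ => ∫ s in Set.Ioc (0:ℝ) t, Gh H (s * y ^ (-(1/H))))
      (nhdsWithin 0 (Set.Ioi 0)) (nhds (t * I)) := by
    have hDCT := MeasureTheory.tendsto_integral_filter_of_dominated_convergence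
      (μ := volume.restrict (Set.Ioc (0:ℝ) t))
      (l := nhdsWithin (0:ℝ) (Set.Ioi 0))
      (F := fun y s => Gh H (s * y ^ (-(1/H)))) (f := fun _ => I)
      (bound := fun _ => I)
      (Filter.Eventually.of_forall fun y =>
        (((Gh_mono H hg).measurable.comp (measurable_id.mul_const _)).aestronglyMeasurable))
      (Filter.Eventually.of_forall fun y => Filter.Eventually.of_forall fun s => by
        rw [Real.norm_eq_abs, abs_of_nonneg (Gh_nonneg H _)]
        exact Gh_le H hg _)
      (integrableOn_const measure_Ioc_lt_top.ne)
      (by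
        rw [ae_restrict_iff' measurableSet_Ioc]
        exact Filter.Eventually.of_forall fun s hs => tendsto_Gh H hH0 hg hs.1)
    have hconst : (∫ _ in Set.Ioc (0:ℝ) t, I) = t * I := by
      rw [setIntegral_const, measureReal_def, Real.volume_Ioc, smul_eq_mul]
      rw [ENNReal.toReal_ofReal (by linarith)]
      ring_nf
    rwa [hconst] at hDCT
  have hlim := hmain.const_mul (-(1 / Real.sqrt (2 * Real.pi)))
  have hval : -(1 / Real.sqrt (2 * Real.pi)) * (t * I)
      = -(t / Real.sqrt (2 * Real.pi)) * I := by ring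
  rw [hval] at hlim
  refine hlim.congr' ?_
  filter_upwards [self_mem_nhdsWithin] with y hy
  exact (key_identity H t hH0 ht F hF hy).symm
end

section
/- Let H = 1/3 and t > 0, and define F(y) := -(y/√(2π)) ∫₀ᵗ ∫₀ˢ (s-r)^{-1} exp(-y²/(2(s-r)^{2/3})) dr ds for y > 0. Then lim_{y → 0⁺} F(y)/(y log y) = 3t/√(2π). -/
open Real MeasureTheory Filter

noncomputable def hh (y u : ℝ) : ℝ :=
  u⁻¹ * Real.exp (-y ^ 2 / (2 * u ^ ((2 : ℝ) / 3)))

noncomputable def gg (y s : ℝ) : ℝ := ∫ u in Set.Ioc (0:ℝ) s, hh y u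

lemma hh_meas (y : ℝ) : Measurable (hh y) := by
  unfold hh; fun_prop

lemma hh_nonneg (y : ℝ) {u : ℝ} (hu : 0 ≤ u) : 0 ≤ hh y u :=
  mul_nonneg (inv_nonneg.mpr hu) (Real.exp_nonneg _)

lemma hh_le_inv (y : ℝ) {u : ℝ} (hu : 0 ≤ u) : hh y u ≤ u⁻¹ := by
  have h1 : Real.exp (-y ^ 2 / (2 * u ^ ((2 : ℝ) / 3))) ≤ 1 := by
    rw [Real.exp_le_one_iff]
    apply div_nonpos_of_nonpos_of_nonneg
    · simp [sq_nonneg]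
    · positivity
  calc hh y u ≤ u⁻¹ * 1 := mul_le_mul_of_nonneg_left h1 (inv_nonneg.mpr hu)
    _ = u⁻¹ := mul_one _

lemma exp_neg_le {x : ℝ} (hx : 0 < x) : Real.exp (-x) ≤ 4 / x ^ 2 := by
  have h1 : x ^ 2 / 4 ≤ Real.exp x := by
    have h2 : x / 2 + 1 ≤ Real.exp (x / 2) := Real.add_one_le_exp _
    have h3 : (x / 2) ^ 2 ≤ (x / 2 + 1) ^ 2 := by nlinarith
    have h4 : (x / 2 + 1) ^ 2 ≤ (Real.exp (x / 2)) ^ 2 := by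
      apply pow_le_pow_left₀ (by linarith) h2
    calc x ^ 2 / 4 = (x / 2) ^ 2 := by ring
      _ ≤ (Real.exp (x / 2)) ^ 2 := le_trans h3 h4
      _ = Real.exp x := by rw [sq, ← Real.exp_add]; ring_nf
  rw [Real.exp_neg]
  rw [inv_le_comm₀ (Real.exp_pos x) (by positivity)]
  rw [inv_div]
  exact h1

lemma hh_le (hy : 0 < (y : ℝ)) {u : ℝ} (hu : 0 < u) :
    hh y u ≤ 16 * u ^ ((1 : ℝ) / 3) / y ^ 4 := by
  have hx : 0 < y ^ 2 / (2 * u ^ ((2 : ℝ) / 3)) := by positivity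
  have h1 := exp_neg_le hx
  have hupos : (0:ℝ) < u ^ ((2:ℝ)/3) := Real.rpow_pos_of_pos hu _
  have h2 : 4 / (y ^ 2 / (2 * u ^ ((2 : ℝ) / 3))) ^ 2 = 16 * u ^ ((4 : ℝ) / 3) / y ^ 4 := by
    have h3 : (u ^ ((2:ℝ)/3)) ^ 2 = u ^ ((4:ℝ)/3) := by
      rw [← Real.rpow_natCast (u ^ ((2:ℝ)/3)) 2, ← Real.rpow_mul hu.le]
      norm_num
    field_simp
    nlinarith [h3, sq_nonneg (u ^ ((2:ℝ)/3))]
  have h4 : hh y u ≤ u⁻¹ * (16 * u ^ ((4 : ℝ) / 3) / y ^ 4) := by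
    rw [← h2]
    unfold hh
    rw [neg_div]
    exact mul_le_mul_of_nonneg_left h1 (inv_nonneg.mpr hu.le)
  calc hh y u ≤ u⁻¹ * (16 * u ^ ((4 : ℝ) / 3) / y ^ 4) := h4
    _ = 16 * u ^ ((1 : ℝ) / 3) / y ^ 4 := by
        have h5 : u ^ ((4:ℝ)/3) = u * u ^ ((1:ℝ)/3) := by
          rw [show ((4:ℝ)/3) = 1 + (1:ℝ)/3 by norm_num, Real.rpow_add hu, Real.rpow_one]
        rw [h5]
        field_simp

lemma hh_intOn (hy : 0 < (y:ℝ)) (s : ℝ) : IntegrableOn (hh y) (Set.Ioc 0 s) := by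
  rcases le_or_gt s 0 with hs | hs
  · rw [Set.Ioc_eq_empty (not_lt.mpr hs)]
    exact integrableOn_empty
  · apply Integrable.mono' (g := fun _ => 16 * s ^ ((1:ℝ)/3) / y ^ 4)
    · exact integrableOn_const (by rw [Real.volume_Ioc]; exact ENNReal.ofReal_ne_top)
    · exact ((hh_meas y).aestronglyMeasurable).restrict
    · filter_upwards [ae_restrict_mem measurableSet_Ioc] with u hu
      rw [Real.norm_eq_abs, abs_of_nonneg (hh_nonneg y hu.1.le)]
      calc hh y u ≤ 16 * u ^ ((1:ℝ)/3) / y ^ 4 := hh_le hy hu.1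
        _ ≤ 16 * s ^ ((1:ℝ)/3) / y ^ 4 := by
            gcongr 16 * ?_ / y ^ 4
            exact Real.rpow_le_rpow hu.1.le hu.2 (by norm_num)

lemma hh_intervalInt (hy : 0 < (y:ℝ)) {a b : ℝ} (ha : 0 ≤ a) (hab : a ≤ b) :
    IntervalIntegrable (hh y) volume a b := by
  rw [intervalIntegrable_iff, Set.uIoc_of_le hab]
  exact (hh_intOn hy b).mono_set (Set.Ioc_subset_Ioc_left ha)

lemma pow3_rpow {y : ℝ} (hy : 0 ≤ y) (r : ℝ) : ((y ^ 3 : ℝ)) ^ r = y ^ (3 * r) := by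
  rw [← Real.rpow_natCast y 3, ← Real.rpow_mul hy]
  norm_num

lemma tail_le (hy : 0 < (y:ℝ)) {m : ℝ} (hm : 0 ≤ m) :
    ∫ u in Set.Ioc (0:ℝ) m, hh y u ≤ 12 * m ^ ((4:ℝ)/3) / y ^ 4 := by
  have hint2 : IntegrableOn (fun u : ℝ => 16 * u ^ ((1:ℝ)/3) / y ^ 4) (Set.Ioc 0 m) := by
    have : IntervalIntegrable (fun u : ℝ => u ^ ((1:ℝ)/3)) volume 0 m :=
      intervalIntegral.intervalIntegrable_rpow (Or.inl (by norm_num))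
    rw [intervalIntegrable_iff, Set.uIoc_of_le hm] at this
    exact (this.const_mul 16).div_const _
  have h1 : ∫ u in Set.Ioc (0:ℝ) m, hh y u ≤ ∫ u in Set.Ioc (0:ℝ) m, 16 * u ^ ((1:ℝ)/3) / y ^ 4 :=
    setIntegral_mono_on (hh_intOn hy m) hint2 measurableSet_Ioc (fun u hu => hh_le hy hu.1)
  have h2 : ∫ u in Set.Ioc (0:ℝ) m, 16 * u ^ ((1:ℝ)/3) / y ^ 4 = 12 * m ^ ((4:ℝ)/3) / y ^ 4 := by
    rw [← intervalIntegral.integral_of_le hm]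
    have : ∀ u : ℝ, 16 * u ^ ((1:ℝ)/3) / y ^ 4 = (16 / y ^ 4) * u ^ ((1:ℝ)/3) := fun u => by ring
    simp only [this]
    rw [intervalIntegral.integral_const_mul, integral_rpow (Or.inl (by norm_num))]
    rw [Real.zero_rpow (by norm_num)]
    norm_num
    ring
  linarith

lemma gg_nonneg (y s : ℝ) : 0 ≤ gg y s :=
  setIntegral_nonneg measurableSet_Ioc (fun u hu => hh_nonneg y hu.1.le)

lemma gg_mono (hy : 0 < (y:ℝ)) : Monotone (gg y) := by
  intro a b hab
  apply setIntegral_mono_set (hh_intOn hy b)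
  · filter_upwards [ae_restrict_mem measurableSet_Ioc] with u hu
    exact hh_nonneg y hu.1.le
  · exact HasSubset.Subset.eventuallyLE (Set.Ioc_subset_Ioc_right hab)

lemma gg_small (hy : 0 < (y:ℝ)) {s : ℝ} (hs0 : 0 ≤ s) (hss : s ≤ y ^ 3) : gg y s ≤ 12 := by
  have h1 := tail_le hy hs0
  have h2 : s ^ ((4:ℝ)/3) ≤ y ^ 4 := by
    calc s ^ ((4:ℝ)/3) ≤ (y ^ 3) ^ ((4:ℝ)/3) := Real.rpow_le_rpow hs0 hss (by norm_num)
      _ = y ^ 4 := by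
          rw [pow3_rpow hy.le, show (3:ℝ) * ((4:ℝ)/3) = ((4:ℕ):ℝ) by norm_num, Real.rpow_natCast]
  have hy4 : (0:ℝ) < y ^ 4 := by positivity
  calc gg y s ≤ 12 * s ^ ((4:ℝ)/3) / y ^ 4 := h1
    _ ≤ 12 * y ^ 4 / y ^ 4 := by gcongr 12 * ?_ / y ^ 4
    _ = 12 := by field_simp

lemma gg_upper (hy : 0 < (y:ℝ)) {s : ℝ} (hs : y ^ 3 ≤ s) :
    gg y s ≤ 12 + (Real.log s - 3 * Real.log y) := by
  have hy3 : (0:ℝ) < y ^ 3 := by positivity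
  have hs0 : (0:ℝ) < s := lt_of_lt_of_le hy3 hs
  have hsplit : gg y s = (∫ u in Set.Ioc (0:ℝ) (y^3), hh y u) + ∫ u in (y^3)..s, hh y u := by
    rw [gg, ← intervalIntegral.integral_of_le hs0.le, ← intervalIntegral.integral_of_le hy3.le,
      intervalIntegral.integral_add_adjacent_intervals (hh_intervalInt hy le_rfl hy3.le)
        (hh_intervalInt hy hy3.le hs)]
  have h1 : (∫ u in Set.Ioc (0:ℝ) (y^3), hh y u) ≤ 12 := gg_small hy hy3.le le_rfl
  have h2 : ∫ u in (y^3)..s, hh y u ≤ ∫ u in (y^3)..s, u⁻¹ := by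
    apply intervalIntegral.integral_mono_on hs (hh_intervalInt hy hy3.le hs)
    · apply intervalIntegral.intervalIntegrable_inv (f := fun x : ℝ => x) ?_ continuousOn_id
      intro x hx
      rw [Set.uIcc_of_le hs] at hx
      exact (lt_of_lt_of_le hy3 hx.1).ne' 
    · intro x hx
      exact hh_le_inv y (le_trans hy3.le hx.1)
  have h3 : ∫ u in (y^3)..s, (u : ℝ)⁻¹ = Real.log s - 3 * Real.log y := by
    rw [integral_inv_of_pos hy3 hs0, Real.log_div hs0.ne' hy3.ne', Real.log_pow]
    push_cast
    ring
  linarith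

lemma gg_lower (hy : 0 < (y:ℝ)) {s : ℝ} (hs : y ^ 3 ≤ s) :
    Real.log s - 3 * Real.log y - 3 / 4 ≤ gg y s := by
  have hy3 : (0:ℝ) < y ^ 3 := by positivity
  have hs0 : (0:ℝ) < s := lt_of_lt_of_le hy3 hs
  have hstep : (∫ u in (y^3)..s, hh y u) ≤ gg y s := by
    rw [intervalIntegral.integral_of_le hs]
    apply setIntegral_mono_set (hh_intOn hy s)
    · filter_upwards [ae_restrict_mem measurableSet_Ioc] with u hu
      exact hh_nonneg y hu.1.le
    · exact HasSubset.Subset.eventuallyLE (Set.Ioc_subset_Ioc_left hy3.le)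
  have hnz : ∀ x : ℝ, x ∈ Set.uIcc (y^3) s → x ≠ 0 := by
    intro x hx
    rw [Set.uIcc_of_le hs] at hx
    exact (lt_of_lt_of_le hy3 hx.1).ne'
  have hint1 : IntervalIntegrable (fun x : ℝ => x⁻¹) volume (y^3) s :=
    intervalIntegral.intervalIntegrable_inv (f := fun x : ℝ => x) hnz continuousOn_id
  have hint2 : IntervalIntegrable (fun x : ℝ => x ^ (-(5:ℝ)/3)) volume (y^3) s := by
    apply intervalIntegral.intervalIntegrable_rpow (Or.inr ?_)
    intro h
    exact hnz 0 h rfl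
  have hpt : ∀ x ∈ Set.Icc (y^3) s, x⁻¹ - y^2/2 * x ^ (-(5:ℝ)/3) ≤ hh y x := by
    intro x hx
    have hx0 : (0:ℝ) < x := lt_of_lt_of_le hy3 hx.1
    have hxr : (0:ℝ) < x ^ ((2:ℝ)/3) := Real.rpow_pos_of_pos hx0 _
    have he : 1 - y^2 / (2 * x ^ ((2:ℝ)/3)) ≤ Real.exp (-y^2 / (2 * x ^ ((2:ℝ)/3))) := by
      have := Real.add_one_le_exp (-y^2 / (2 * x ^ ((2:ℝ)/3)))
      rw [neg_div] at this ⊢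
      linarith
    have h1 : x⁻¹ * (1 - y^2 / (2 * x ^ ((2:ℝ)/3))) ≤ hh y x :=
      mul_le_mul_of_nonneg_left he (inv_nonneg.mpr hx0.le)
    have h2 : x⁻¹ * (1 - y^2 / (2 * x ^ ((2:ℝ)/3))) = x⁻¹ - y^2/2 * x ^ (-(5:ℝ)/3) := by
      have h3 : x ^ (-(5:ℝ)/3) = x⁻¹ * (x ^ ((2:ℝ)/3))⁻¹ := by
        rw [← Real.rpow_neg_one x, ← Real.rpow_neg hx0.le, ← Real.rpow_add hx0]
        norm_num
      rw [h3]
      field_simp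
    linarith [h1, h2.symm.le]
  have hmono : (∫ u in (y^3)..s, (u⁻¹ - y^2/2 * u ^ (-(5:ℝ)/3))) ≤ ∫ u in (y^3)..s, hh y u := by
    apply intervalIntegral.integral_mono_on hs (hint1.sub (hint2.const_mul _))
      (hh_intervalInt hy hy3.le hs) hpt
  have hval : (∫ u in (y^3)..s, (u⁻¹ - y^2/2 * u ^ (-(5:ℝ)/3)))
      = (Real.log s - 3 * Real.log y) - y^2/2 * ((s ^ (-(2:ℝ)/3) - (y^3) ^ (-(2:ℝ)/3)) / (-(2:ℝ)/3)) := by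
    rw [intervalIntegral.integral_sub hint1 (hint2.const_mul _),
      intervalIntegral.integral_const_mul, integral_inv_of_pos hy3 hs0,
      Real.log_div hs0.ne' hy3.ne', Real.log_pow,
      integral_rpow (Or.inr ⟨by norm_num, fun h => hnz 0 h rfl⟩)]
    push_cast
    norm_num
  have hy2 : (0:ℝ) < y ^ 2 := by positivity
  have hyy : (y ^ 3 : ℝ) ^ (-(2:ℝ)/3) = (y ^ 2)⁻¹ := by
    rw [pow3_rpow hy.le]
    norm_num
  have hsr : (0:ℝ) ≤ s ^ (-(2:ℝ)/3) := Real.rpow_nonneg hs0.le _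
  have hbd : y^2/2 * ((s ^ (-(2:ℝ)/3) - (y^3) ^ (-(2:ℝ)/3)) / (-(2:ℝ)/3)) ≤ 3/4 := by
    rw [hyy]
    have h6 : y ^ 2 * (y ^ 2)⁻¹ = 1 := mul_inv_cancel₀ hy2.ne'
    nlinarith [mul_nonneg hy2.le hsr]
  linarith

lemma inv_log_tendsto : Tendsto (fun y : ℝ => (Real.log y)⁻¹) (nhdsWithin 0 (Set.Ioi 0)) (nhds 0) := by
  have h1 : Tendsto (fun y : ℝ => -Real.log y) (nhdsWithin 0 (Set.Ioi 0)) atTop :=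
    tendsto_neg_atBot_atTop.comp Real.tendsto_log_nhdsGT_zero
  have h2 : Tendsto (fun y : ℝ => (-Real.log y)⁻¹) (nhdsWithin 0 (Set.Ioi 0)) (nhds 0) :=
    h1.inv_tendsto_atTop
  have h3 := h2.neg
  simp only [neg_neg, inv_neg, neg_zero] at h3
  exact h3

lemma const_div_log_tendsto (c : ℝ) :
    Tendsto (fun y : ℝ => c / Real.log y - 3) (nhdsWithin 0 (Set.Ioi 0)) (nhds (-3)) := by
  have h1 := inv_log_tendsto.const_mul c
  simp only [mul_zero] at h1
  have h2 := h1.sub_const 3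
  simp only [zero_sub] at h2
  refine h2.congr fun y => ?_
  rw [div_eq_mul_inv]

lemma gg_tendsto {s : ℝ} (hs : 0 < s) :
    Tendsto (fun y => gg y s / Real.log y) (nhdsWithin 0 (Set.Ioi 0)) (nhds (-3)) := by
  have hmem : Set.Ioo (0:ℝ) (min 1 (s ^ ((1:ℝ)/3))) ∈ nhdsWithin (0:ℝ) (Set.Ioi 0) :=
    Ioo_mem_nhdsGT_of_mem ⟨le_refl 0, by positivity⟩
  have hfacts : ∀ y ∈ Set.Ioo (0:ℝ) (min 1 (s ^ ((1:ℝ)/3))),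
      0 < y ∧ Real.log y < 0 ∧ y ^ 3 ≤ s := by
    intro y hy
    have hy0 : 0 < y := hy.1
    have hy1 : y < 1 := lt_of_lt_of_le hy.2 (min_le_left _ _)
    have hys : y < s ^ ((1:ℝ)/3) := lt_of_lt_of_le hy.2 (min_le_right _ _)
    refine ⟨hy0, Real.log_neg hy0 hy1, ?_⟩
    have h3 : y ^ 3 ≤ (s ^ ((1:ℝ)/3)) ^ 3 := pow_le_pow_left₀ hy0.le hys.le 3
    have h4 : (s ^ ((1:ℝ)/3)) ^ 3 = s := by
      rw [← Real.rpow_natCast (s ^ ((1:ℝ)/3)) 3, ← Real.rpow_mul hs.le]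
      norm_num
    linarith
  apply tendsto_of_tendsto_of_tendsto_of_le_of_le' (const_div_log_tendsto (12 + Real.log s))
      (const_div_log_tendsto (Real.log s - 3/4))
  · filter_upwards [hmem] with y hy
    obtain ⟨hy0, hL, hys⟩ := hfacts y hy
    have h1 : gg y s ≤ 12 + Real.log s - 3 * Real.log y := by linarith [gg_upper hy0 hys]
    rw [div_sub' hL.ne, div_le_div_right_of_neg hL]
    linarith
  · filter_upwards [hmem] with y hy
    obtain ⟨hy0, hL, hys⟩ := hfacts y hy
    have h1 : Real.log s - 3/4 - 3 * Real.log y ≤ gg y s := by linarith [gg_lower hy0 hys]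
    rw [div_sub' hL.ne, div_le_div_right_of_neg hL]
    linarith

lemma gg_bdd {y s t : ℝ} (hy : 0 < y) (hy1 : y ≤ Real.exp (-1)) (hs : 0 < s) (hst : s ≤ t) :
    |gg y s / Real.log y| ≤ 15 + |Real.log t| := by
  have hL : Real.log y ≤ -1 := by
    calc Real.log y ≤ Real.log (Real.exp (-1)) := Real.log_le_log hy hy1
      _ = -1 := Real.log_exp _
  have hLneg : Real.log y < 0 := by linarith
  have habs : 1 ≤ |Real.log y| := by
    rw [abs_of_neg hLneg]; linarith
  have h0 : 0 ≤ gg y s := gg_nonneg y s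
  have hgg : gg y s ≤ 12 + |Real.log t| + 3 * |Real.log y| := by
    rcases le_or_gt (y ^ 3) s with h | h
    · have h1 := gg_upper hy h
      have h2 : Real.log s ≤ |Real.log t| := by
        calc Real.log s ≤ Real.log t := Real.log_le_log hs hst
          _ ≤ |Real.log t| := le_abs_self _
      rw [abs_of_neg hLneg]
      linarith
    · have h1 := gg_small hy hs.le h.le
      have h2 : (0:ℝ) ≤ |Real.log t| := abs_nonneg _
      have h3 : (0:ℝ) ≤ 3 * |Real.log y| := by positivity
      linarith
  rw [abs_div, abs_of_nonneg h0]
  have hLpos : 0 < |Real.log y| := by linarith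
  calc gg y s / |Real.log y| ≤ (12 + |Real.log t| + 3 * |Real.log y|) / |Real.log y| := by
        gcongr
    _ = (12 + |Real.log t|) / |Real.log y| + 3 := by field_simp
    _ ≤ (12 + |Real.log t|) + 3 := by
        have := div_le_self (by positivity : (0:ℝ) ≤ 12 + |Real.log t|) habs
        linarith
    _ = 15 + |Real.log t| := by ring

lemma int_tendsto {t : ℝ} (ht : 0 < t) :
    Tendsto (fun y => ∫ s in Set.Ioc (0:ℝ) t, gg y s / Real.log y)
      (nhdsWithin 0 (Set.Ioi 0)) (nhds (-3 * t)) := by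
  have key := MeasureTheory.tendsto_integral_filter_of_dominated_convergence
      (μ := volume.restrict (Set.Ioc (0:ℝ) t)) (l := nhdsWithin (0:ℝ) (Set.Ioi 0))
      (F := fun y s => gg y s / Real.log y) (f := fun _ => (-3:ℝ))
      (fun _ => 15 + |Real.log t|) ?_ ?_ ?_ ?_
  · have hval : (∫ _ in Set.Ioc (0:ℝ) t, (-3:ℝ)) = -3 * t := by
      rw [setIntegral_const, Real.volume_real_Ioc, smul_eq_mul]
      rw [max_eq_left (by linarith)]
      ring
    rwa [hval] at key
  · filter_upwards [self_mem_nhdsWithin] with y hy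
    exact ((gg_mono hy).measurable.div_const _).aestronglyMeasurable
  · filter_upwards [Ioo_mem_nhdsGT_of_mem ⟨le_refl (0:ℝ), Real.exp_pos (-1)⟩] with y hy
    filter_upwards [ae_restrict_mem measurableSet_Ioc] with s hs
    rw [Real.norm_eq_abs]
    exact gg_bdd hy.1 hy.2.le hs.1 hs.2
  · exact integrableOn_const (by rw [Real.volume_Ioc]; exact ENNReal.ofReal_ne_top)
  · filter_upwards [ae_restrict_mem measurableSet_Ioc] with s hs
    exact gg_tendsto hs.1

theorem stmt_11 (t : ℝ) (ht : 0 < t)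
    (F : ℝ → ℝ)
    (hF : ∀ y, F y = -(y / Real.sqrt (2 * Real.pi)) *
      ∫ s in Set.Ioc (0:ℝ) t, ∫ r in Set.Ioc (0:ℝ) s,
        (s - r)⁻¹ * Real.exp (-y ^ 2 / (2 * (s - r) ^ ((2 : ℝ) / 3)))) :
    Tendsto (fun y => F y / (y * Real.log y)) (nhdsWithin 0 (Set.Ioi 0))
      (nhds (3 * t / Real.sqrt (2 * Real.pi))) := by
  have hFr : ∀ y : ℝ, F y = -(y / Real.sqrt (2 * Real.pi)) * ∫ s in Set.Ioc (0:ℝ) t, gg y s := by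
    intro y
    rw [hF y]
    congr 1
    refine setIntegral_congr_fun measurableSet_Ioc fun s hs => ?_
    have h0s : (0:ℝ) ≤ s := hs.1.le
    show (∫ r in Set.Ioc (0:ℝ) s, hh y (s - r)) = gg y s
    rw [gg, ← intervalIntegral.integral_of_le h0s, ← intervalIntegral.integral_of_le h0s,
      intervalIntegral.integral_comp_sub_left (hh y) s, sub_self, sub_zero]
  have heq : ∀ᶠ y in nhdsWithin (0:ℝ) (Set.Ioi 0),
      -(1 / Real.sqrt (2 * Real.pi)) * ∫ s in Set.Ioc (0:ℝ) t, gg y s / Real.log y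
        = F y / (y * Real.log y) := by
    filter_upwards [self_mem_nhdsWithin] with y (hy : y ∈ Set.Ioi 0)
    have hy0 : (y:ℝ) ≠ 0 := ne_of_gt hy
    rw [hFr y, MeasureTheory.integral_div]
    set I := ∫ s in Set.Ioc (0:ℝ) t, gg y s with hI
    have h : (-(y / Real.sqrt (2*Real.pi)) * I) / (y * Real.log y)
        = (y * y⁻¹) * (-(1/Real.sqrt (2*Real.pi)) * (I / Real.log y)) := by
      rw [div_eq_mul_inv, mul_inv]
      ring
    rw [h, mul_inv_cancel₀ hy0, one_mul]
  have hlim : Tendsto (fun y => -(1 / Real.sqrt (2 * Real.pi)) *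
      ∫ s in Set.Ioc (0:ℝ) t, gg y s / Real.log y)
      (nhdsWithin 0 (Set.Ioi 0)) (nhds (-(1 / Real.sqrt (2 * Real.pi)) * (-3 * t))) :=
    (int_tendsto ht).const_mul _
  have hval : (3 * t / Real.sqrt (2 * Real.pi)) = -(1 / Real.sqrt (2 * Real.pi)) * (-3 * t) := by
    ring
  rw [hval]
  exact hlim.congr' heq
end

section
/- Fix H ∈ (0,1) and t > 0. The function y ↦ -(y/√(2π)) ∫₀ᵗ ∫₀ˢ (s-r)^{-3H} exp(-y²/(2(s-r)^{2H})) dr ds is continuous at every y ≠ 0, and (when H < 1/2 the inner integrals converge for y = 0 as well) the function extends continuously by 0 at y = 0 if and only if H < 1/2. -/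
open Real MeasureTheory Filter Set Topology

set_option linter.unusedSectionVars false

/-! Auxiliary boundedness lemmas -/

lemma aux_L0 (a : ℝ) (ha : 0 ≤ a) :
    ∃ M : ℝ, 1 ≤ M ∧ ∀ w : ℝ, 0 ≤ w → w ^ a * Real.exp (-w / 2) ≤ M := by
  rcases eq_or_lt_of_le ha with rfl | ha
  · refine ⟨1, le_refl 1, fun w hw => ?_⟩
    rcases eq_or_lt_of_le hw with rfl | hw
    · norm_num
    · rw [Real.rpow_zero, one_mul, Real.exp_le_one_iff]
      linarith
  · have htend : Tendsto (fun w : ℝ => w ^ a * Real.exp (-w / 2)) atTop (𝓝 0) := by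
      have := tendsto_rpow_mul_exp_neg_mul_atTop_nhds_zero a (1/2) (by norm_num)
      refine this.congr (fun x => by rw [show -(1/2)*x = -x/2 by ring])
    have hev : ∀ᶠ w in atTop, (fun w : ℝ => w ^ a * Real.exp (-w / 2)) w < 1 :=
      htend.eventually_lt_const one_pos
    obtain ⟨W, hW⟩ := eventually_atTop.mp hev
    have hcont : ContinuousOn (fun w : ℝ => w ^ a * Real.exp (-w / 2)) (Icc 0 W) := by
      apply ContinuousOn.mul
      · intro x _
        exact (Real.continuousAt_rpow_const x a (Or.inr ha.le)).continuousWithinAt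
      · exact (Real.continuous_exp.comp (by continuity)).continuousOn
    obtain ⟨C, hC⟩ := (isCompact_Icc (a := (0:ℝ)) (b := W)).exists_bound_of_continuousOn hcont
    refine ⟨max 1 C, le_max_left _ _, fun w hw => ?_⟩
    rcases le_total w W with h | h
    · calc w ^ a * Real.exp (-w / 2) ≤ ‖w ^ a * Real.exp (-w / 2)‖ := le_abs_self _
        _ ≤ C := hC w ⟨hw, h⟩
        _ ≤ max 1 C := le_max_right _ _
    · exact le_trans (hW w h).le (le_max_left _ _)

lemma aux_L1 (H : ℝ) (hH0 : 0 < H) (b : ℝ) (hb : b ≤ 0) :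
    ∃ M : ℝ, 1 ≤ M ∧ ∀ v : ℝ, 0 < v →
      v ^ b * Real.exp (-1 / (2 * v ^ (2 * H))) ≤ M := by
  obtain ⟨M, hM1, hM⟩ := aux_L0 (-b / (2 * H)) (div_nonneg (neg_nonneg.mpr hb) (by positivity))
  refine ⟨M, hM1, fun v hv => ?_⟩
  have hw : (0:ℝ) < v ^ (-(2 * H)) := Real.rpow_pos_of_pos hv _
  have h1 : v ^ b = (v ^ (-(2 * H))) ^ (-b / (2 * H)) := by
    rw [← Real.rpow_mul hv.le]
    congr 1
    field_simp
  have h2 : -1 / (2 * v ^ (2 * H)) = -(v ^ (-(2 * H))) / 2 := by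
    have hp : (0:ℝ) < v ^ (2 * H) := Real.rpow_pos_of_pos hv _
    rw [Real.rpow_neg hv.le]
    field_simp
  rw [h1, h2]
  exact hM _ hw.le

/-! The basic functions -/

noncomputable def phiA (H v : ℝ) : ℝ := v ^ (-(3 * H)) * Real.exp (-1 / (2 * v ^ (2 * H)))
noncomputable def JA (H x : ℝ) : ℝ := ∫ v in (0:ℝ)..x, phiA H v
noncomputable def KA (H x : ℝ) : ℝ := ∫ w in (0:ℝ)..x, JA H w

lemma phiA_nonneg (H : ℝ) (v : ℝ) (hv : 0 ≤ v) : 0 ≤ phiA H v :=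
  mul_nonneg (Real.rpow_nonneg hv _) (Real.exp_pos _).le

lemma phiA_pos (H : ℝ) (v : ℝ) (hv : 0 < v) : 0 < phiA H v :=
  mul_pos (Real.rpow_pos_of_pos hv _) (Real.exp_pos _)

lemma phiA_meas (H : ℝ) : Measurable (phiA H) := by
  unfold phiA
  fun_prop

lemma phiA_bdd (H : ℝ) (hH0 : 0 < H) : ∃ M : ℝ, 1 ≤ M ∧ ∀ v : ℝ, 0 < v → phiA H v ≤ M := by
  obtain ⟨M, hM1, hM⟩ := aux_L1 H hH0 (-(3 * H)) (by nlinarith)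
  exact ⟨M, hM1, fun v hv => hM v hv⟩

lemma phiA_intOn (H : ℝ) (hH0 : 0 < H) (x : ℝ) : IntegrableOn (phiA H) (Ioc 0 x) := by
  obtain ⟨M, _, hM⟩ := phiA_bdd H hH0
  refine Measure.integrableOn_of_bounded (M := M) (by simp [measure_Ioc_lt_top.ne])
    (phiA_meas H).aestronglyMeasurable ?_
  refine (ae_restrict_iff' measurableSet_Ioc).mpr (ae_of_all _ fun v hv => ?_)
  rw [Real.norm_eq_abs, abs_of_nonneg (phiA_nonneg H v hv.1.le)]
  exact hM v hv.1

lemma phiA_intIcc (H : ℝ) (hH0 : 0 < H) (x : ℝ) : IntegrableOn (phiA H) (Icc 0 x) := by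
  rw [integrableOn_Icc_iff_integrableOn_Ioc]
  exact phiA_intOn H hH0 x

lemma phiA_ii (H : ℝ) (hH0 : 0 < H) (a b : ℝ) (ha : 0 ≤ a) (hb : 0 ≤ b) :
    IntervalIntegrable (phiA H) volume a b := by
  rcases le_total a b with h | h
  · rw [intervalIntegrable_iff_integrableOn_Ioc_of_le h]
    exact (phiA_intOn H hH0 b).mono_set (Ioc_subset_Ioc_left ha)
  · refine IntervalIntegrable.symm ?_
    rw [intervalIntegrable_iff_integrableOn_Ioc_of_le h]
    exact (phiA_intOn H hH0 a).mono_set (Ioc_subset_Ioc_left hb)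

/-! Properties of JA and KA -/

lemma JA_contOn {H : ℝ} (hH0 : 0 < H) (b : ℝ) (hb : 0 ≤ b) : ContinuousOn (JA H) (Icc 0 b) := by
  have := intervalIntegral.continuousOn_primitive_interval
    (f := phiA H) (μ := volume) (a := 0) (b := b) ?_
  · rwa [uIcc_of_le hb] at this
  · rw [uIcc_of_le hb]; exact phiA_intIcc H hH0 b

lemma JA_contAt {H : ℝ} (hH0 : 0 < H) (x : ℝ) (hx : 0 < x) : ContinuousAt (JA H) x :=
  (JA_contOn hH0 (x + 1) (by linarith)).continuousAt
    (Icc_mem_nhds hx (lt_add_one x))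

lemma JA_nonneg {H : ℝ} (hH0 : 0 < H) (x : ℝ) (hx : 0 ≤ x) : 0 ≤ JA H x :=
  intervalIntegral.integral_nonneg hx fun v hv => phiA_nonneg H v hv.1

lemma JA_mono {H : ℝ} (hH0 : 0 < H) (x y : ℝ) (hx : 0 ≤ x) (hxy : x ≤ y) : JA H x ≤ JA H y := by
  have h : JA H x + ∫ v in x..y, phiA H v = JA H y :=
    intervalIntegral.integral_add_adjacent_intervals
      (phiA_ii H hH0 0 x le_rfl hx) (phiA_ii H hH0 x y hx (le_trans hx hxy))
  have h2 : 0 ≤ ∫ v in x..y, phiA H v :=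
    intervalIntegral.integral_nonneg hxy fun v hv => phiA_nonneg H v (le_trans hx hv.1)
  linarith

lemma JA_intIcc {H : ℝ} (hH0 : 0 < H) (b : ℝ) (hb : 0 ≤ b) : IntegrableOn (JA H) (Icc 0 b) :=
  (JA_contOn hH0 b hb).integrableOn_Icc

lemma JA_ii {H : ℝ} (hH0 : 0 < H) (a b : ℝ) (ha : 0 ≤ a) (hb : 0 ≤ b) :
    IntervalIntegrable (JA H) volume a b := by
  rcases le_total a b with h | h
  · rw [intervalIntegrable_iff_integrableOn_Ioc_of_le h]
    exact (JA_intIcc hH0 b hb).mono_set ((Ioc_subset_Ioc_left ha).trans Ioc_subset_Icc_self)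
  · refine IntervalIntegrable.symm ?_
    rw [intervalIntegrable_iff_integrableOn_Ioc_of_le h]
    exact (JA_intIcc hH0 a ha).mono_set ((Ioc_subset_Ioc_left hb).trans Ioc_subset_Icc_self)

lemma KA_contAt {H : ℝ} (hH0 : 0 < H) (x : ℝ) (hx : 0 < x) : ContinuousAt (KA H) x := by
  have h := intervalIntegral.continuousOn_primitive_interval
    (f := JA H) (μ := volume) (a := 0) (b := x + 1) ?_
  · rw [uIcc_of_le (by linarith : (0:ℝ) ≤ x + 1)] at h
    exact h.continuousAt (Icc_mem_nhds hx (lt_add_one x))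
  · rw [uIcc_of_le (by linarith : (0:ℝ) ≤ x + 1)]
    exact JA_intIcc hH0 (x + 1) (by linarith)

lemma KA_nonneg {H : ℝ} (hH0 : 0 < H) (x : ℝ) (hx : 0 ≤ x) : 0 ≤ KA H x :=
  intervalIntegral.integral_nonneg hx fun w hw => JA_nonneg hH0 w hw.1

lemma JA_one_pos {H : ℝ} (hH0 : 0 < H) : 0 < JA H 1 := by
  refine intervalIntegral.intervalIntegral_pos_of_pos_on
    (phiA_ii H hH0 0 1 le_rfl zero_le_one) (fun v hv => phiA_pos H v hv.1) one_pos

lemma KA_lower {H : ℝ} (hH0 : 0 < H) (x : ℝ) (hx : 2 ≤ x) : x / 2 * JA H 1 ≤ KA H x := by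
  have h0x : (0:ℝ) ≤ x / 2 := by linarith
  have hsplit : KA H x = (∫ w in (0:ℝ)..(x/2), JA H w) + ∫ w in (x/2)..x, JA H w :=
    (intervalIntegral.integral_add_adjacent_intervals
      (JA_ii hH0 0 (x/2) le_rfl h0x) (JA_ii hH0 (x/2) x h0x (by linarith))).symm
  have h1 : 0 ≤ ∫ w in (0:ℝ)..(x/2), JA H w :=
    intervalIntegral.integral_nonneg h0x fun w hw => JA_nonneg hH0 w hw.1
  have h2 : x / 2 * JA H 1 ≤ ∫ w in (x/2)..x, JA H w := by
    have : (∫ _w in (x/2)..x, JA H 1) ≤ ∫ w in (x/2)..x, JA H w := by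
      refine intervalIntegral.integral_mono_on (by linarith)
        (intervalIntegrable_const) (JA_ii hH0 (x/2) x h0x (by linarith)) ?_
      intro w hw
      exact JA_mono hH0 1 w (by linarith [hw.1]) (by linarith [hw.1])
    rwa [intervalIntegral.integral_const, smul_eq_mul, show x - x/2 = x/2 by ring] at this
  linarith

/-! Closed form via substitution -/

lemma c_pos {H : ℝ} (hH0 : 0 < H) (y : ℝ) (hy : y ≠ 0) : 0 < |y| ^ (1/H) :=
  Real.rpow_pos_of_pos (abs_pos.mpr hy) _

lemma c_2H {H : ℝ} (hH0 : 0 < H) (y : ℝ) (hy : y ≠ 0) : (|y| ^ (1/H)) ^ (2*H) = y ^ 2 := by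
  rw [← Real.rpow_mul (abs_nonneg y)]
  rw [show 1/H * (2*H) = 2 by field_simp]
  rw [Real.rpow_two, sq_abs]

lemma inner_eq {H : ℝ} (hH0 : 0 < H) (y s : ℝ) (hy : y ≠ 0) (hs : 0 < s) :
    (∫ r in Ioc (0:ℝ) s, (s - r) ^ (-(3 * H)) * Real.exp (-y ^ 2 / (2 * (s - r) ^ (2 * H))))
      = (|y| ^ (1/H)) ^ (1 - 3*H) * JA H (s / |y| ^ (1/H)) := by
  set c : ℝ := |y| ^ (1/H) with hcdef
  have hc : 0 < c := c_pos hH0 y hy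
  have hc2H : c ^ (2*H) = y ^ 2 := c_2H hH0 y hy
  set f : ℝ → ℝ := fun u => u ^ (-(3 * H)) * Real.exp (-y ^ 2 / (2 * u ^ (2 * H))) with hfdef
  have h3H : -(3 * H) ≠ 0 := by nlinarith
  rw [← intervalIntegral.integral_of_le hs.le]
  have h1 : (∫ r in (0:ℝ)..s, f (s - r)) = ∫ u in (0:ℝ)..s, f u := by
    simpa using intervalIntegral.integral_comp_sub_left f s
  have h2 : (∫ u in (0:ℝ)..s, f u) = c • ∫ v in (0:ℝ)..(s/c), f (c * v) := by
    have h := intervalIntegral.smul_integral_comp_mul_left (a := 0) (b := s/c) f c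
    rw [mul_zero, show c * (s/c) = s by field_simp] at h
    exact h.symm
  have h3 : (∫ v in (0:ℝ)..(s/c), f (c * v))
      = ∫ v in (0:ℝ)..(s/c), c ^ (-(3 * H)) * phiA H v := by
    refine intervalIntegral.integral_congr ?_
    intro v hv
    rw [uIcc_of_le (by positivity : (0:ℝ) ≤ s/c)] at hv
    rcases eq_or_lt_of_le hv.1 with rfl | hv0
    · simp only [mul_zero, hfdef, phiA]
      rw [Real.zero_rpow h3H, zero_mul, zero_mul, mul_zero]
    · have hv2H : v ^ (2*H) ≠ 0 := ne_of_gt (Real.rpow_pos_of_pos hv0 _)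
      have hy2 : y ^ 2 ≠ 0 := pow_ne_zero 2 hy
      simp only [hfdef, phiA]
      rw [Real.mul_rpow hc.le hv0.le, Real.mul_rpow hc.le hv0.le, hc2H]
      rw [show -y ^ 2 / (2 * (y ^ 2 * v ^ (2*H))) = -1 / (2 * v ^ (2*H)) by
        field_simp]
      ring
  rw [show (fun r => (s - r) ^ (-(3 * H)) * Real.exp (-y ^ 2 / (2 * (s - r) ^ (2 * H))))
      = fun r => f (s - r) from rfl]
  rw [h1, h2, h3, intervalIntegral.integral_const_mul]
  rw [smul_eq_mul, ← mul_assoc, show c * c ^ (-(3*H)) = c ^ (1 - 3*H) by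
    rw [show (1:ℝ) - 3*H = 1 + -(3*H) by ring, Real.rpow_add hc, Real.rpow_one]]
  rfl

lemma closedForm {H : ℝ} (hH0 : 0 < H) (t : ℝ) (ht : 0 < t) (y : ℝ) (hy : y ≠ 0) :
    (∫ s in Ioc (0:ℝ) t, ∫ r in Ioc (0:ℝ) s,
        (s - r) ^ (-(3 * H)) * Real.exp (-y ^ 2 / (2 * (s - r) ^ (2 * H))))
      = (|y| ^ (1/H)) ^ (2 - 3*H) * KA H (t / |y| ^ (1/H)) := by
  set c : ℝ := |y| ^ (1/H) with hcdef
  have hc : 0 < c := c_pos hH0 y hy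
  rw [setIntegral_congr_fun measurableSet_Ioc
    (fun s hs => inner_eq hH0 y s hy hs.1)]
  rw [← intervalIntegral.integral_of_le ht.le, intervalIntegral.integral_const_mul]
  rw [intervalIntegral.integral_comp_div (c := c) (f := JA H) (ne_of_gt hc)]
  rw [zero_div, smul_eq_mul, ← mul_assoc, show c ^ (1-3*H) * c = c ^ (2 - 3*H) by
    rw [show (2:ℝ) - 3*H = (1 - 3*H) + 1 by ring, Real.rpow_add hc, Real.rpow_one]]
  rfl

/-! The three main parts -/

lemma part1 {H t : ℝ} (hH0 : 0 < H) (ht : 0 < t) (F : ℝ → ℝ)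
    (hF : ∀ y, F y = -(y / Real.sqrt (2 * Real.pi)) *
      ∫ s in Set.Ioc (0:ℝ) t, ∫ r in Set.Ioc (0:ℝ) s,
        (s - r) ^ (-(3 * H)) * Real.exp (-y ^ 2 / (2 * (s - r) ^ (2 * H))))
    (y₀ : ℝ) (hy₀ : y₀ ≠ 0) : ContinuousAt F y₀ := by
  set Φ : ℝ → ℝ := fun y =>
    -(y / Real.sqrt (2 * Real.pi)) * ((|y| ^ (1/H)) ^ (2 - 3*H) * KA H (t / |y| ^ (1/H)))
    with hΦdef
  have hc0 : 0 < |y₀| ^ (1/H) := c_pos hH0 y₀ hy₀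
  have hΦcont : ContinuousAt Φ y₀ := by
    have h1 : ContinuousAt (fun y : ℝ => |y| ^ (1/H)) y₀ :=
      continuous_abs.continuousAt.rpow_const (Or.inl (abs_ne_zero.mpr hy₀))
    have h2 : ContinuousAt (fun y : ℝ => (|y| ^ (1/H)) ^ (2 - 3*H)) y₀ :=
      h1.rpow_const (Or.inl (ne_of_gt hc0))
    have h3 : ContinuousAt (fun y : ℝ => t / |y| ^ (1/H)) y₀ :=
      continuousAt_const.div h1 (ne_of_gt hc0)
    have h4 : ContinuousAt (fun y : ℝ => KA H (t / |y| ^ (1/H))) y₀ :=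
      ContinuousAt.comp (g := KA H) (KA_contAt hH0 (t / |y₀| ^ (1/H)) (by positivity)) h3
    exact ((continuousAt_id.div_const _).neg).mul (h2.mul h4)
  refine hΦcont.congr ?_
  filter_upwards [isOpen_ne.mem_nhds hy₀] with y hy
  rw [hΦdef, hF y, closedForm hH0 t ht y hy]

lemma part2a {H t : ℝ} (hH0 : 0 < H) (hH2 : H < 1/2) (ht : 0 < t) (F : ℝ → ℝ)
    (hF : ∀ y, F y = -(y / Real.sqrt (2 * Real.pi)) *
      ∫ s in Set.Ioc (0:ℝ) t, ∫ r in Set.Ioc (0:ℝ) s,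
        (s - r) ^ (-(3 * H)) * Real.exp (-y ^ 2 / (2 * (s - r) ^ (2 * H)))) :
    Tendsto F (nhds 0) (nhds 0) := by
  set β : ℝ := min (3*H) ((2*H+1)/2) with hβdef
  have hβpos : 0 < β := lt_min (by linarith) (by linarith)
  have hβ1 : β < 1 := lt_of_le_of_lt (min_le_right _ _) (by linarith)
  have hβ3H : β ≤ 3*H := min_le_left _ _
  have hβ2H : 2*H < β := lt_min (by linarith) (by linarith)
  obtain ⟨M, hM1, hM⟩ := aux_L1 H hH0 (β - 3*H) (by linarith)
  have hM0 : 0 < M := lt_of_lt_of_le one_pos hM1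
  have hsπ : 0 < Real.sqrt (2 * Real.pi) := Real.sqrt_pos.mpr (by positivity)
  have hphi_le : ∀ v : ℝ, 0 ≤ v → phiA H v ≤ M * v ^ (-β) := by
    intro v hv
    rcases eq_or_lt_of_le hv with rfl | hv0
    · simp only [phiA]
      rw [Real.zero_rpow (by nlinarith : -(3*H) ≠ 0),
        Real.zero_rpow (by nlinarith : -β ≠ 0), zero_mul, mul_zero]
    · have : phiA H v = v ^ (-β) * (v ^ (β - 3*H) * Real.exp (-1 / (2 * v ^ (2 * H)))) := by
        simp only [phiA]
        rw [← mul_assoc, ← Real.rpow_add hv0, show -β + (β - 3*H) = -(3*H) by ring]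
      rw [this, mul_comm M _]
      exact mul_le_mul_of_nonneg_left (hM v hv0) (Real.rpow_nonneg hv _)
  have hJ_le : ∀ x : ℝ, 0 ≤ x → JA H x ≤ M / (1-β) * x ^ (1-β) := by
    intro x hx
    have h1 : JA H x ≤ ∫ v in (0:ℝ)..x, M * v ^ (-β) := by
      refine intervalIntegral.integral_mono_on hx (phiA_ii H hH0 0 x le_rfl hx)
        ((intervalIntegral.intervalIntegrable_rpow' (by linarith)).const_mul M)
        (fun v hv => hphi_le v hv.1)
    have h2 : (∫ v in (0:ℝ)..x, M * v ^ (-β)) = M / (1-β) * x ^ (1-β) := by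
      rw [intervalIntegral.integral_const_mul, integral_rpow (Or.inl (by linarith)),
        Real.zero_rpow (by linarith : -β + 1 ≠ 0), show -β + 1 = 1 - β by ring]
      field_simp
      ring
    linarith
  have hK_le : ∀ x : ℝ, 0 ≤ x → KA H x ≤ M / ((1-β)*(2-β)) * x ^ (2-β) := by
    intro x hx
    have h1 : KA H x ≤ ∫ w in (0:ℝ)..x, M / (1-β) * w ^ (1-β) := by
      refine intervalIntegral.integral_mono_on hx (JA_ii hH0 0 x le_rfl hx)
        ((intervalIntegral.intervalIntegrable_rpow' (by linarith)).const_mul _)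
        (fun w hw => hJ_le w hw.1)
    have h2 : (∫ w in (0:ℝ)..x, M / (1-β) * w ^ (1-β)) = M / ((1-β)*(2-β)) * x ^ (2-β) := by
      rw [intervalIntegral.integral_const_mul, integral_rpow (Or.inl (by linarith)),
        Real.zero_rpow (by linarith : 1 - β + 1 ≠ 0), show 1 - β + 1 = 2 - β by ring]
      have h1β : (1:ℝ) - β ≠ 0 := by linarith
      have h2β : (2:ℝ) - β ≠ 0 := by linarith
      field_simp
      ring
    linarith
  set δ : ℝ := (β - 2*H)/H with hδdef
  have hδpos : 0 < δ := div_pos (by linarith) hH0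
  set C : ℝ := M / ((1-β)*(2-β)) * t ^ (2-β) / Real.sqrt (2 * Real.pi) with hCdef
  have hC0 : 0 ≤ C := by
    apply div_nonneg _ hsπ.le
    apply mul_nonneg _ (Real.rpow_nonneg ht.le _)
    apply div_nonneg hM0.le
    nlinarith
  have hbound : ∀ y : ℝ, ‖F y‖ ≤ C * |y| ^ δ := by
    intro y
    rcases eq_or_ne y 0 with rfl | hy
    · rw [hF 0]
      simp [Real.zero_rpow (ne_of_gt hδpos)]
    · set c : ℝ := |y| ^ (1/H) with hcdef
      have hc : 0 < c := c_pos hH0 y hy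
      have hay : 0 < |y| := abs_pos.mpr hy
      rw [hF y, closedForm hH0 t ht y hy]
      have hKnn : 0 ≤ KA H (t / c) := KA_nonneg hH0 _ (by positivity)
      have hcnn : (0:ℝ) ≤ c ^ (2 - 3*H) := Real.rpow_nonneg hc.le _
      rw [norm_mul, norm_neg, norm_div, Real.norm_eq_abs, Real.norm_eq_abs,
        abs_of_pos hsπ, Real.norm_eq_abs, abs_of_nonneg (mul_nonneg hcnn hKnn)]
      have step1 : c ^ (2 - 3*H) * KA H (t / c) ≤
          c ^ (2 - 3*H) * (M / ((1-β)*(2-β)) * (t/c) ^ (2-β)) :=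
        mul_le_mul_of_nonneg_left (hK_le (t/c) (by positivity)) hcnn
      have step2 : |y| / Real.sqrt (2*Real.pi) *
            (c ^ (2 - 3*H) * (M / ((1-β)*(2-β)) * (t/c) ^ (2-β)))
          = C * |y| ^ δ := by
        rw [Real.div_rpow ht.le hc.le]
        rw [show c ^ (2 - 3*H) * (M / ((1-β)*(2-β)) * (t ^ (2-β) / c ^ (2-β)))
            = M / ((1-β)*(2-β)) * t ^ (2-β) * (c ^ (2-3*H) / c ^ (2-β)) by ring]
        rw [← Real.rpow_sub hc, show 2 - 3*H - (2-β) = β - 3*H by ring]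
        have key : |y| * (|y| ^ (1/H)) ^ (β - 3*H) = |y| ^ δ := by
          rw [← Real.rpow_mul (abs_nonneg y)]
          nth_rewrite 1 [← Real.rpow_one |y|]
          rw [← Real.rpow_add hay, hδdef]
          congr 1
          field_simp
          ring
        rw [hCdef, ← key, hcdef]
        ring
      calc |y| / Real.sqrt (2*Real.pi) * (c ^ (2 - 3*H) * KA H (t/c))
          ≤ |y| / Real.sqrt (2*Real.pi) *
              (c ^ (2 - 3*H) * (M / ((1-β)*(2-β)) * (t/c) ^ (2-β))) :=
            mul_le_mul_of_nonneg_left step1 (by positivity)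
        _ = C * |y| ^ δ := step2
  have htends : Tendsto (fun y : ℝ => C * |y| ^ δ) (nhds 0) (nhds 0) := by
    have h1 : Tendsto (fun y : ℝ => |y|) (nhds 0) (nhds 0) :=
      continuous_abs.tendsto' 0 0 abs_zero
    have h2 := (h1.rpow_const (Or.inr hδpos.le)).const_mul C
    simpa [Real.zero_rpow (ne_of_gt hδpos)] using h2
  exact squeeze_zero_norm hbound htends

lemma part2b {H t : ℝ} (hH0 : 0 < H) (h12 : 1/2 ≤ H) (ht : 0 < t) (F : ℝ → ℝ)
    (hF : ∀ y, F y = -(y / Real.sqrt (2 * Real.pi)) *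
      ∫ s in Set.Ioc (0:ℝ) t, ∫ r in Set.Ioc (0:ℝ) s,
        (s - r) ^ (-(3 * H)) * Real.exp (-y ^ 2 / (2 * (s - r) ^ (2 * H)))) :
    ¬ Tendsto F (nhds 0) (nhds 0) := by
  intro htd
  have hsπ : 0 < Real.sqrt (2 * Real.pi) := Real.sqrt_pos.mpr (by positivity)
  have hJ1 : 0 < JA H 1 := JA_one_pos hH0
  set C : ℝ := t * JA H 1 / (2 * Real.sqrt (2 * Real.pi)) with hCdef
  have hC : 0 < C := by positivity
  set δ₀ : ℝ := min 1 ((t/2) ^ H) with hδ₀def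
  have hδ₀ : 0 < δ₀ := lt_min one_pos (Real.rpow_pos_of_pos (by linarith) _)
  have hlow : ∀ y : ℝ, 0 < y → y < δ₀ → C ≤ |F y| := by
    intro y hy hyδ
    have hy1 : y ≤ 1 := le_trans hyδ.le (min_le_left _ _)
    have hyt : y ≤ (t/2) ^ H := le_trans hyδ.le (min_le_right _ _)
    have hyne : y ≠ 0 := ne_of_gt hy
    set c : ℝ := |y| ^ (1/H) with hcdef
    have hceq : c = y ^ (1/H) := by rw [hcdef, abs_of_pos hy]
    have hc : 0 < c := by rw [hceq]; exact Real.rpow_pos_of_pos hy _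
    have hct2 : c ≤ t / 2 := by
      rw [hceq]
      calc y ^ (1/H) ≤ ((t/2) ^ H) ^ (1/H) :=
            Real.rpow_le_rpow hy.le hyt (by positivity)
        _ = t / 2 := by
            rw [← Real.rpow_mul (by linarith : (0:ℝ) ≤ t/2), mul_one_div,
              div_self (ne_of_gt hH0), Real.rpow_one]
    have hct : 2 ≤ t / c := by
      rw [le_div_iff₀ hc]
      linarith
    have hKlow : t / (2 * c) * JA H 1 ≤ KA H (t / c) := by
      have := KA_lower hH0 (t/c) hct
      rwa [div_div, mul_comm c 2] at this
    have hKnn : 0 ≤ t / (2*c) * JA H 1 := by positivity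
    rw [hF y, closedForm hH0 t ht y hyne, ← hcdef]
    rw [abs_mul, abs_neg, abs_div, abs_of_pos hsπ, abs_of_pos hy,
      abs_of_nonneg (mul_nonneg (Real.rpow_nonneg hc.le _) (le_trans hKnn hKlow))]
    have step1 : y / Real.sqrt (2*Real.pi) * (c ^ (2-3*H) * (t / (2*c) * JA H 1))
        ≤ y / Real.sqrt (2*Real.pi) * (c ^ (2-3*H) * KA H (t/c)) := by
      apply mul_le_mul_of_nonneg_left _ (by positivity)
      exact mul_le_mul_of_nonneg_left hKlow (Real.rpow_nonneg hc.le _)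
    refine le_trans ?_ step1
    have hkey : c ^ (2-3*H) / c = c ^ (1-3*H) := by
      have h := Real.rpow_sub hc (2-3*H) 1
      rw [Real.rpow_one] at h
      rw [← h]
      congr 1
      ring
    have hexp : y * c ^ (1-3*H) = y ^ ((1-2*H)/H) := by
      rw [hceq, ← Real.rpow_mul hy.le]
      nth_rewrite 1 [← Real.rpow_one y]
      rw [← Real.rpow_add hy]
      congr 1
      field_simp
      ring
    have hge1 : 1 ≤ y ^ ((1-2*H)/H) := by
      apply Real.one_le_rpow_of_pos_of_le_one_of_nonpos hy hy1
      apply div_nonpos_of_nonpos_of_nonneg _ hH0.le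
      linarith
    have heq : y / Real.sqrt (2*Real.pi) * (c ^ (2-3*H) * (t / (2*c) * JA H 1))
        = C * (y * c ^ (1-3*H)) := by
      rw [hCdef, ← hkey]
      field_simp
    rw [heq, hexp]
    calc C = C * 1 := (mul_one C).symm
      _ ≤ C * y ^ ((1-2*H)/H) := mul_le_mul_of_nonneg_left hge1 hC.le
  have hev1 : ∀ᶠ y in 𝓝[>] (0:ℝ), |F y| < C := by
    apply nhdsWithin_le_nhds
    have : F ⁻¹' (Ioo (-C) C) ∈ 𝓝 (0:ℝ) := htd (Ioo_mem_nhds (by linarith) hC)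
    filter_upwards [this] with y hy using abs_lt.mpr hy
  have hev2 : ∀ᶠ y in 𝓝[>] (0:ℝ), y < δ₀ := by
    apply nhdsWithin_le_nhds
    filter_upwards [Iio_mem_nhds hδ₀] with y hy using hy
  have hev3 : ∀ᶠ y in 𝓝[>] (0:ℝ), 0 < y := eventually_mem_nhdsWithin
  obtain ⟨y, h1, h2, h3⟩ := (hev1.and (hev2.and hev3)).exists
  have := hlow y h3 h2
  linarith

theorem stmt_12 (H t : ℝ) (hH0 : 0 < H) (hH1 : H < 1) (ht : 0 < t)
    (F : ℝ → ℝ)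
    (hF : ∀ y, F y = -(y / Real.sqrt (2 * Real.pi)) *
      ∫ s in Set.Ioc (0:ℝ) t, ∫ r in Set.Ioc (0:ℝ) s,
        (s - r) ^ (-(3 * H)) * Real.exp (-y ^ 2 / (2 * (s - r) ^ (2 * H)))) :
    (∀ y : ℝ, y ≠ 0 → ContinuousAt F y) ∧
    (Tendsto F (nhds 0) (nhds 0) ↔ H < 1 / 2) := by
  refine ⟨fun y hy => part1 hH0 ht F hF y hy, ?_, fun h => part2a hH0 h ht F hF⟩
  intro h
  by_contra h2
  push_neg at h2
  exact part2b hH0 h2 ht F hF h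
end
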